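/- Let P be a well-founded, level-finite interval order and let x be a minimal element of P such that U(x) is maximal with respect to set inclusion among {U(t) : t ∈ Min(P)}. Then U(x) = P \ Min(P); equivalently, Min(P) is the only maximal antichain of P containing x. -/

import Mathlib

/-- Two elements are incomparable. -/
def Incomp {α : Type*} [PartialOrder α] (x y : α) : Prop := ¬ x ≤ y ∧ ¬ y ≤ x

/-- A poset is an interval order iff it does not embed `2 ⊕ 2`. -/
def IsIntervalOrder (α : Type*) [PartialOrder α] : Prop :=
  ¬ ∃ a b c d : α, a < b ∧ c < d ∧ Incomp a c ∧ Incomp a d ∧ Incomp b c ∧ Incomp b d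

/-- The strict up-set of an element. -/
def U {α : Type*} [PartialOrder α] (x : α) : Set α := {y : α | x < y}

/-- In a well-founded level-finite interval order, if `x` is a minimal element
such that `U x` is maximal with respect to inclusion among `{U t : t minimal}`,
then `U x` is exactly the complement of the set of minimal elements;
equivalently, the set of minimal elements is the only maximal antichain
containing `x`. -/
theorem upset_of_max_minimal {α : Type*} [PartialOrder α]
    (hio : IsIntervalOrder α)
    (hwf : WellFounded ((· < ·) : α → α → Prop))
    (hlf : ∀ o : Ordinal, {x : α | (hwf.apply x).rank = o}.Finite)
    (x : α) (hx : IsMin x)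
    (hmax : ∀ t : α, IsMin t → U x ⊆ U t → U t = U x) :
    U x = {y : α | ¬ IsMin y} := by
  ext y
  simp only [U, Set.mem_setOf_eq]
  constructor
  · intro hxy hymin
    exact absurd (hymin hxy.le) (not_le_of_gt hxy)
  · intro hy
    by_contra hxy
    -- find a minimal element m ≤ y
    obtain ⟨m, hm_mem, hm_min⟩ := hwf.has_min {z | z ≤ y} ⟨y, le_refl y⟩
    have hmMin : IsMin m := by
      intro a ha
      have : ¬ a < m := hm_min a (ha.trans hm_mem)
      exact (eq_of_le_of_not_lt ha this) ▸ le_refl m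
    have hmy : m < y := lt_of_le_of_ne hm_mem (by
      rintro rfl
      exact hy hmMin)
    -- U x ⊆ U m would give U m = U x, but y ∈ U m \ U x
    have hne : ¬ U x ⊆ U m := by
      intro hsub
      have := hmax m hmMin hsub
      exact hxy (this ▸ hmy : y ∈ U x)
    obtain ⟨w, hw, hmw⟩ := Set.not_subset.mp hne
    have hxw : x < w := hw
    -- x ≠ m
    have hxm : x ≠ m := by rintro rfl; exact hxy hmy
    -- build 2⊕2
    apply hio
    refine ⟨m, y, x, w, hmy, hxw, ?_, ?_, ?_, ?_⟩
    · constructor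
      · intro h; exact hxm (le_antisymm (hx h) h)
      · intro h; exact hxm (le_antisymm h (hmMin h))
    · constructor
      · intro h
        rcases lt_or_eq_of_le h with h' | h'
        · exact hmw h'
        · subst h'; exact absurd (hmMin hxw.le) (not_le_of_gt hxw)
      · intro h
        have e : w = m := le_antisymm h (hmMin h)
        subst e
        exact absurd (hmMin hxw.le) (not_le_of_gt hxw)
    · constructor
      · intro h
        have e : y = x := le_antisymm h (hx h)
        subst e
        exact hy hx
      · intro h
        exact hxy (lt_of_le_of_ne h (by rintro rfl; exact hy hx))
    · constructor
      · intro h; exact hmw (lt_of_lt_of_le hmy h)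
      · intro h; exact hxy (lt_of_lt_of_le hxw h)
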